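/- Let d ≥ 3 and t(r) = −(r/|r|)(1 − |r|³)^{1/3} for r in the unit ball B₁ of ℝ³ minus the origin. Then t is an involution of B₁ \ {0} onto itself (t(t(r)) = r), |t(r)|³ = 1 − |r|³, and the pushforward of the normalized uniform measure on B₁ under t is again the normalized uniform measure on B₁. -/

import Mathlib

open MeasureTheory Metric Real

noncomputable def seidlG (s : ℝ) : ℝ := -((1 - s ^ 3) ^ ((1 : ℝ) / 3) / s)

noncomputable def seidlGd (s : ℝ) : ℝ :=
  -((((1:ℝ)/3 * (1 - s ^ 3) ^ ((1:ℝ)/3 - 1) * -(3 * s ^ 2)) * s - (1 - s ^ 3) ^ ((1:ℝ)/3) * 1) / s ^ 2)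

lemma one_sub_cube_pos {s : ℝ} (h0 : 0 < s) (h1 : s < 1) : (0:ℝ) < 1 - s ^ 3 := by
  have : s ^ 3 < 1 := pow_lt_one₀ h0.le h1 (by norm_num)
  linarith

lemma seidlG_hasDerivAt {s : ℝ} (h0 : 0 < s) (h1 : s < 1) :
    HasDerivAt seidlG (seidlGd s) s := by
  have hp : (0:ℝ) < 1 - s ^ 3 := one_sub_cube_pos h0 h1
  have h3 : HasDerivAt (fun s : ℝ => 1 - s ^ 3) (-(3 * s ^ 2)) s := by
    simpa using (hasDerivAt_pow 3 s).const_sub 1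
  have hn := h3.rpow_const (p := (1:ℝ)/3) (Or.inl hp.ne')
  have h := (hn.div (hasDerivAt_id s) h0.ne').neg
  exact h.congr_deriv (by rw [seidlGd]; simp only [id]; ring)

lemma seidl_u_cube {s : ℝ} (h0 : 0 < s) (h1 : s < 1) :
    ((1 - s ^ 3) ^ ((1:ℝ)/3)) ^ 3 = 1 - s ^ 3 := by
  have hp := one_sub_cube_pos h0 h1
  rw [← Real.rpow_natCast ((1 - s ^ 3) ^ ((1:ℝ)/3)) 3, ← Real.rpow_mul hp.le]
  norm_num

lemma seidlGd_eq {s : ℝ} (h0 : 0 < s) (h1 : s < 1) :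
    seidlGd s = 1 / (((1 - s ^ 3) ^ ((1:ℝ)/3)) ^ 2 * s ^ 2) := by
  have hp : (0:ℝ) < 1 - s ^ 3 := one_sub_cube_pos h0 h1
  have hu : (0:ℝ) < (1 - s ^ 3) ^ ((1:ℝ)/3) := Real.rpow_pos_of_pos hp _
  have hu3 := seidl_u_cube h0 h1
  have hsub : (1 - s ^ 3) ^ ((1:ℝ)/3 - 1) = (1 - s ^ 3) ^ ((1:ℝ)/3) / (1 - s ^ 3) := by
    rw [Real.rpow_sub hp, Real.rpow_one]
  rw [seidlGd, hsub]
  set u := (1 - s ^ 3) ^ ((1:ℝ)/3) with hu_def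
  rw [← hu3]
  field_simp
  linear_combination hu3

lemma hasFDerivAt_norm' {F : Type*} [NormedAddCommGroup F] [InnerProductSpace ℝ F]
    {x : F} (hx : x ≠ 0) :
    HasFDerivAt (fun y => ‖y‖) (‖x‖⁻¹ • innerSL ℝ x) x := by
  have h2 : ‖x‖ ^ 2 ≠ 0 := pow_ne_zero _ (norm_ne_zero_iff.mpr hx)
  have h := (Real.hasDerivAt_sqrt h2).comp_hasFDerivAt x (hasStrictFDerivAt_norm_sq x).hasFDerivAt
  have he : ((fun x => √x) ∘ fun y : F => ‖y‖ ^ 2) = fun y => ‖y‖ := by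
    funext y; exact Real.sqrt_sq (norm_nonneg y)
  rw [he] at h
  convert h using 1
  · rfl
  · rfl
  rw [Real.sqrt_sq (norm_nonneg x)]
  ext v
  simp only [ContinuousLinearMap.coe_smul', Pi.smul_apply, smul_eq_mul]
  have hn : ‖x‖ ≠ 0 := norm_ne_zero_iff.mpr hx
  field_simp
  ring

noncomputable def seidlA (r : EuclideanSpace ℝ (Fin 3)) :
    EuclideanSpace ℝ (Fin 3) →L[ℝ] EuclideanSpace ℝ (Fin 3) :=
  seidlG ‖r‖ • ContinuousLinearMap.id ℝ _ +
    (seidlGd ‖r‖ • (‖r‖⁻¹ • innerSL ℝ r)).smulRight r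

lemma seidlA_hasFDerivAt {r : EuclideanSpace ℝ (Fin 3)} (hr : r ≠ 0) (h1 : ‖r‖ < 1) :
    HasFDerivAt (fun y => seidlG ‖y‖ • y) (seidlA r) r := by
  have h0 : 0 < ‖r‖ := norm_pos_iff.mpr hr
  have hc : HasFDerivAt (fun y : EuclideanSpace ℝ (Fin 3) => seidlG ‖y‖)
      (seidlGd ‖r‖ • (‖r‖⁻¹ • innerSL ℝ r)) r :=
    (seidlG_hasDerivAt h0 h1).comp_hasFDerivAt r (hasFDerivAt_norm' hr)
  have := hc.smul (hasFDerivAt_id r)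
  exact this

lemma seidlA_apply (r v : EuclideanSpace ℝ (Fin 3)) :
    seidlA r v = seidlG ‖r‖ • v + (seidlGd ‖r‖ * (‖r‖⁻¹ * inner ℝ r v)) • r := by
  simp [seidlA, ContinuousLinearMap.smulRight_apply, mul_assoc, smul_smul]

lemma euclid_norm_sq (r : EuclideanSpace ℝ (Fin 3)) :
    r 0 ^ 2 + r 1 ^ 2 + r 2 ^ 2 = ‖r‖ ^ 2 := by
  have := EuclideanSpace.norm_eq r
  rw [this, Real.sq_sqrt (by positivity)]
  simp [Fin.sum_univ_three, sq_abs]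

lemma seidlA_det {r : EuclideanSpace ℝ (Fin 3)} (hr : r ≠ 0) (h1 : ‖r‖ < 1) :
    (seidlA r).det = 1 := by
  classical
  set b := (EuclideanSpace.basisFun (Fin 3) ℝ).toBasis with hb
  show LinearMap.det ((seidlA r : EuclideanSpace ℝ (Fin 3) →ₗ[ℝ] EuclideanSpace ℝ (Fin 3))) = 1
  rw [← LinearMap.det_toMatrix b]
  have hM : ∀ i j, LinearMap.toMatrix b b (seidlA r) i j
      = seidlG ‖r‖ * (if i = j then 1 else 0) + (seidlGd ‖r‖ * ‖r‖⁻¹) * (r j * r i) := by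
    intro i j
    rw [LinearMap.toMatrix_apply]
    simp [hb, seidlA_apply, EuclideanSpace.inner_single_right,
      EuclideanSpace.single_apply, mul_comm, mul_assoc, mul_left_comm]
  rw [Matrix.det_fin_three]
  simp only [hM]
  norm_num [Fin.ext_iff]
  have hs2 := euclid_norm_sq r
  have h0 : 0 < ‖r‖ := norm_pos_iff.mpr hr
  have hp : (0:ℝ) < 1 - ‖r‖ ^ 3 := one_sub_cube_pos h0 h1
  have hu : (0:ℝ) < (1 - ‖r‖ ^ 3) ^ ((1:ℝ)/3) := Real.rpow_pos_of_pos hp _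
  have hu3 : ((1 - ‖r‖ ^ 3) ^ ((1:ℝ)/3)) ^ 3 = 1 - ‖r‖ ^ 3 := seidl_u_cube h0 h1
  have hgd := seidlGd_eq h0 h1
  have hkey : seidlG ‖r‖ ^ 3
      + seidlG ‖r‖ ^ 2 * (seidlGd ‖r‖ * ‖r‖⁻¹) * (r 0 ^ 2 + r 1 ^ 2 + r 2 ^ 2) = 1 := by
    rw [hs2, hgd, seidlG]
    set u := (1 - ‖r‖ ^ 3) ^ ((1:ℝ)/3)
    field_simp
    linear_combination (-1) * hu3
  linear_combination hkey


lemma seidlG_norm_smul {r : EuclideanSpace ℝ (Fin 3)} (hr : r ≠ 0) (h1 : ‖r‖ < 1) :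
    ‖seidlG ‖r‖ • r‖ = (1 - ‖r‖ ^ 3) ^ ((1:ℝ)/3) := by
  have h0 : 0 < ‖r‖ := norm_pos_iff.mpr hr
  have hu : (0:ℝ) < (1 - ‖r‖ ^ 3) ^ ((1:ℝ)/3) :=
    Real.rpow_pos_of_pos (one_sub_cube_pos h0 h1) _
  rw [norm_smul, seidlG, Real.norm_eq_abs, abs_neg, abs_div, abs_of_pos hu,
    abs_of_pos h0, div_mul_cancel₀ _ h0.ne']

lemma cube_root_cube {s : ℝ} (hs : 0 ≤ s) : (s ^ 3 : ℝ) ^ ((1:ℝ)/3) = s := by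
  rw [← Real.rpow_natCast s 3, ← Real.rpow_mul hs]
  norm_num

lemma seidl_mem {r : EuclideanSpace ℝ (Fin 3)} (hr : r ≠ 0) (h1 : ‖r‖ < 1) :
    (seidlG ‖r‖ • r) ∈ ball (0 : EuclideanSpace ℝ (Fin 3)) 1 \ {0} := by
  have h0 : 0 < ‖r‖ := norm_pos_iff.mpr hr
  have hu : (0:ℝ) < (1 - ‖r‖ ^ 3) ^ ((1:ℝ)/3) :=
    Real.rpow_pos_of_pos (one_sub_cube_pos h0 h1) _
  have hu3 := seidl_u_cube h0 h1
  have hn := seidlG_norm_smul hr h1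
  constructor
  · rw [mem_ball_zero_iff, hn]
    exact Real.rpow_lt_one (one_sub_cube_pos h0 h1).le
      (by nlinarith [pow_pos h0 3]) (by norm_num)
  · simp only [Set.mem_singleton_iff]
    intro h
    rw [h, norm_zero] at hn
    exact hu.ne' hn.symm

lemma seidl_invol {r : EuclideanSpace ℝ (Fin 3)} (hr : r ≠ 0) (h1 : ‖r‖ < 1) :
    seidlG ‖seidlG ‖r‖ • r‖ • (seidlG ‖r‖ • r) = r := by
  have h0 : 0 < ‖r‖ := norm_pos_iff.mpr hr
  have hu : (0:ℝ) < (1 - ‖r‖ ^ 3) ^ ((1:ℝ)/3) :=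
    Real.rpow_pos_of_pos (one_sub_cube_pos h0 h1) _
  have hu3 := seidl_u_cube h0 h1
  rw [seidlG_norm_smul hr h1, smul_smul]
  set u := (1 - ‖r‖ ^ 3) ^ ((1:ℝ)/3) with hu_def
  have h13 : 1 - u ^ 3 = ‖r‖ ^ 3 := by rw [hu3]; ring
  have hgu : seidlG u = -(‖r‖ / u) := by
    rw [seidlG, h13, cube_root_cube h0.le]
  rw [hgu, seidlG, ← hu_def]
  have hone : -(‖r‖ / u) * -(u / ‖r‖) = 1 := by field_simp
  rw [hone, one_smul]

lemma seidlG_measurable : Measurable (fun y : EuclideanSpace ℝ (Fin 3) => seidlG ‖y‖ • y) := by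
  apply Measurable.smul (f := fun y : EuclideanSpace ℝ (Fin 3) => seidlG ‖y‖) (g := id) ?_ measurable_id
  unfold seidlG
  fun_prop


lemma seidl_preimage_eq {α : Type*} (T : α → α) (S A : Set α)
    (hmem : ∀ r ∈ S, T r ∈ S) (hinvol : ∀ r ∈ S, T (T r) = r) :
    T ⁻¹' A ∩ S = T '' (A ∩ S) := by
  ext x
  constructor
  · rintro ⟨hxA, hxS⟩
    exact ⟨T x, ⟨hxA, hmem x hxS⟩, hinvol x hxS⟩
  · rintro ⟨y, ⟨hyA, hyS⟩, rfl⟩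
    refine ⟨show T (T y) ∈ A from ?_, hmem y hyS⟩
    rw [hinvol y hyS]; exact hyA

/-- The Seidl co-motion map `t(r) = -(r/|r|)(1 - |r|³)^{1/3}` is an involution of the punctured
unit ball of `ℝ³`, satisfies `|t(r)|³ = 1 - |r|³`, and pushes the normalized uniform measure
on the unit ball forward to itself. -/
theorem seidl_map_involution_and_measurePreserving
    (t : EuclideanSpace ℝ (Fin 3) → EuclideanSpace ℝ (Fin 3))
    (ht : ∀ r, t r = -(((1 - ‖r‖ ^ 3) ^ ((1 : ℝ) / 3) / ‖r‖) • r)) :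
    (∀ r ∈ ball (0 : EuclideanSpace ℝ (Fin 3)) 1 \ {0},
        t r ∈ ball (0 : EuclideanSpace ℝ (Fin 3)) 1 \ {0} ∧
        t (t r) = r ∧
        ‖t r‖ ^ 3 = 1 - ‖r‖ ^ 3) ∧
    Measure.map t
        ((volume (ball (0 : EuclideanSpace ℝ (Fin 3)) 1))⁻¹ •
          volume.restrict (ball (0 : EuclideanSpace ℝ (Fin 3)) 1)) =
      (volume (ball (0 : EuclideanSpace ℝ (Fin 3)) 1))⁻¹ •
        volume.restrict (ball (0 : EuclideanSpace ℝ (Fin 3)) 1) := by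
  have htg : t = fun y => seidlG ‖y‖ • y := by
    funext y; rw [ht y, seidlG, neg_smul]
  subst htg
  set T := fun y : EuclideanSpace ℝ (Fin 3) => seidlG ‖y‖ • y with hT
  set S := ball (0 : EuclideanSpace ℝ (Fin 3)) 1 \ {0} with hS
  have hSmeas : MeasurableSet S := measurableSet_ball.diff (measurableSet_singleton 0)
  -- basic facts
  have hmem : ∀ r ∈ S, T r ∈ S := by
    rintro r ⟨hb, h0⟩
    exact seidl_mem (fun he => h0 he) (mem_ball_zero_iff.mp hb)
  have hinvol : ∀ r ∈ S, T (T r) = r := by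
    rintro r ⟨hb, h0⟩
    exact seidl_invol (fun he => h0 he) (mem_ball_zero_iff.mp hb)
  have hmain : ∀ r ∈ S, T r ∈ S ∧ T (T r) = r ∧ ‖T r‖ ^ 3 = 1 - ‖r‖ ^ 3 := by
    rintro r hr
    obtain ⟨hb, h0⟩ := hr
    have h0' : r ≠ 0 := fun he => h0 he
    have h1' : ‖r‖ < 1 := mem_ball_zero_iff.mp hb
    refine ⟨hmem r ⟨hb, h0⟩, hinvol r ⟨hb, h0⟩, ?_⟩
    rw [show T r = seidlG ‖r‖ • r from rfl, seidlG_norm_smul h0' h1',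
      seidl_u_cube (norm_pos_iff.mpr h0') h1']
  refine ⟨hmain, ?_⟩
  -- measure part
  have hTmeas : Measurable T := seidlG_measurable
  have hinj : Set.InjOn T S := by
    intro a ha b hb h
    rw [← hinvol a ha, ← hinvol b hb, h]
  have himg : ∀ s : Set (EuclideanSpace ℝ (Fin 3)), MeasurableSet s → s ⊆ S →
      volume (T '' s) = volume s := by
    intro s hs hsub
    have hder : ∀ x ∈ s, HasFDerivWithinAt T (seidlA x) s x := by
      intro x hx
      obtain ⟨hb, h0⟩ := hsub hx
      exact (seidlA_hasFDerivAt (fun he => h0 he)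
        (mem_ball_zero_iff.mp hb)).hasFDerivWithinAt
    rw [← lintegral_abs_det_fderiv_eq_addHaar_image volume hs hder (hinj.mono hsub)]
    rw [setLIntegral_congr_fun hs (fun x hx => ?_),
      setLIntegral_one]
    obtain ⟨hb, h0⟩ := hsub hx
    rw [seidlA_det (fun he => h0 he) (mem_ball_zero_iff.mp hb)]
    norm_num
  refine Measure.ext fun A hA => ?_
  rw [Measure.map_apply hTmeas hA, Measure.smul_apply, Measure.smul_apply,
    Measure.restrict_apply hA, Measure.restrict_apply (hTmeas hA)]
  congr 1
  have hnull : ∀ X : Set (EuclideanSpace ℝ (Fin 3)),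
      volume (X ∩ ball 0 1) = volume (X ∩ S) := by
    intro X
    rw [hS, ← Set.inter_diff_assoc]
    exact (measure_diff_null (measure_singleton 0)).symm
  rw [hnull, hnull]
  have hset : T ⁻¹' A ∩ S = T '' (A ∩ S) := seidl_preimage_eq T S A hmem hinvol
  rw [hset, himg (A ∩ S) (hA.inter hSmeas) Set.inter_subset_right]
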